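/- Let F be a faded cosheaf of sets over a topological space B with structure maps R^W_V : F(W) → F(V). Then for every open V ⊆ B and every element x ∈ F(V), the family 𝒜_V(x) = { W : W open, W ⊆ V, x ∈ Im(R^W_V) } is a completely prime filter on the lattice of open subsets of V. -/

import Mathlib

open TopologicalSpace

/-- A cosheaf of sets over a topological space `B`: a set `obj V` for each open
`V ⊆ B` with inclusion maps `map : obj W → obj V` for opens `W ≤ V`, functorial
(`R^V_V = id` and `R^U_V ∘ R^W_U = R^W_V`), and satisfying the cosheaf gluing
condition: for every open `V`, family `𝒲` of opens with `⋃𝒲 = V`, set `M` and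
compatible family of maps `φ_W : obj W → M` (`W ∈ 𝒲`), there is a unique
`ψ : obj V → M` with `φ_W = ψ ∘ R^W_V` for all `W ∈ 𝒲`. -/
structure SetCosheaf (B : Type) [TopologicalSpace B] where
  obj : Opens B → Type
  map : ∀ {W V : Opens B}, W ≤ V → obj W → obj V
  map_id : ∀ (V : Opens B) (x : obj V), map (le_refl V) x = x
  map_comp : ∀ {W U V : Opens B} (h1 : W ≤ U) (h2 : U ≤ V) (x : obj W),
      map h2 (map h1 x) = map (h1.trans h2) x
  glue : ∀ (V : Opens B) (𝒲 : Set (Opens B)) (hV : sSup 𝒲 = V)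
      (M : Type) (φ : ∀ W ∈ 𝒲, obj W → M),
      (∀ U (hU : U ∈ 𝒲) (W) (hW : W ∈ 𝒲) (x : obj (U ⊓ W)),
        φ U hU (map inf_le_left x) = φ W hW (map inf_le_right x)) →
      ∃! ψ : obj V → M, ∀ W (hW : W ∈ 𝒲) (x : obj W),
        φ W hW x = ψ (map (le_of_le_of_eq (le_sSup hW) hV) x)

/-- A faded cosheaf of sets: a cosheaf of sets all of whose inclusion maps are
injective. -/
structure FadedSetCosheaf (B : Type) [TopologicalSpace B] extends SetCosheaf B where
  inj : ∀ {W V : Opens B} (h : W ≤ V), Function.Injective (map h)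

/-- A completely prime filter on the lattice of open subsets of an open set
`V ⊆ B`: a collection `𝒜` of open subsets of `V` containing `V`, upward closed
(within the opens of `V`), closed under binary intersections, and inaccessible
by arbitrary unions of opens of `V`. -/
def IsCPFilterOn {B : Type} [TopologicalSpace B] (V : TopologicalSpace.Opens B)
    (𝒜 : Set (TopologicalSpace.Opens B)) : Prop :=
  (∀ U ∈ 𝒜, U ≤ V) ∧
  V ∈ 𝒜 ∧
  (∀ W ∈ 𝒜, ∀ U : TopologicalSpace.Opens B, W ≤ U → U ≤ V → U ∈ 𝒜) ∧
  (∀ U ∈ 𝒜, ∀ W ∈ 𝒜, U ⊓ W ∈ 𝒜) ∧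
  (∀ 𝒲 : Set (TopologicalSpace.Opens B), (∀ W ∈ 𝒲, W ≤ V) →
    sSup 𝒲 ∈ 𝒜 → ∃ W ∈ 𝒲, W ∈ 𝒜)

noncomputable def pbool (p : Prop) : Bool := @decide p (Classical.propDecidable p)

theorem pbool_congr {p q : Prop} (h : p ↔ q) : pbool p = pbool q :=
  (@decide_eq_decide p q (Classical.propDecidable p) (Classical.propDecidable q)).mpr h

theorem pbool_mp {p q : Prop} (h : pbool p = pbool q) (hp : p) : q :=
  ((@decide_eq_decide p q (Classical.propDecidable p) (Classical.propDecidable q)).mp h).mp hp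

theorem pbool_eq_false {p : Prop} (h : ¬p) : pbool p = false := by
  unfold pbool
  exact @decide_eq_false p (Classical.propDecidable p) h

theorem pbool_eq_true {p : Prop} (h : p) : pbool p = true := by
  unfold pbool
  exact @decide_eq_true p (Classical.propDecidable p) h

/-- For a faded cosheaf of sets `F` over `B`, an open `V` and an
element `x ∈ F(V)`, the family `𝒜_V(x) = {W : W open ⊆ V, x ∈ Im(R^W_V)}` is a
completely prime filter on the lattice of open subsets of `V`. -/
theorem faded_cosheaf_filter_cpf {B : Type} [TopologicalSpace B]
    (F : FadedSetCosheaf B) (V : TopologicalSpace.Opens B) (x : F.obj V) :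
    IsCPFilterOn V {W : TopologicalSpace.Opens B |
      ∃ h : W ≤ V, x ∈ Set.range (F.map h)} := by
  refine ⟨?_, ?_, ?_, ?_, ?_⟩
  · rintro U ⟨h, -⟩; exact h
  · exact ⟨le_refl V, x, F.map_id V x⟩
  · rintro W ⟨hWV, y, hy⟩ U hWU hUV
    exact ⟨hUV, F.map hWU y, by rw [F.map_comp]; exact hy⟩
  · rintro U ⟨hUV, a, ha⟩ W ⟨hWV, b, hb⟩
    refine ⟨inf_le_left.trans hUV, ?_⟩
    obtain ⟨ψ, hψ, -⟩ := F.glue (U ⊔ W) {U, W} sSup_pair Bool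
      (fun T _ z => pbool (∃ d : F.obj (U ⊓ T), F.map inf_le_right d = z))
      (by
        rintro T₁ (rfl | rfl) T₂ (rfl | rfl) c
        · rfl
        · refine pbool_congr (iff_of_true ?_ ⟨c, rfl⟩)
          exact ⟨F.map (le_inf inf_le_left inf_le_left) c, by rw [F.map_comp]⟩
        · refine pbool_congr (iff_of_true ?_ ?_)
          · exact ⟨F.map (le_inf inf_le_right inf_le_left) c, by rw [F.map_comp]⟩
          · exact ⟨F.map (le_inf inf_le_right inf_le_right) c, by rw [F.map_comp]⟩
        · rfl)
    have hUm : U ∈ ({U, W} : Set (Opens B)) := Or.inl rfl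
    have hWm : W ∈ ({U, W} : Set (Opens B)) := Or.inr rfl
    have h1 := hψ U hUm a
    have h2 := hψ W hWm b
    have key : F.map (le_of_le_of_eq (le_sSup hUm) sSup_pair) a
        = F.map (le_of_le_of_eq (le_sSup hWm) sSup_pair) b := by
      apply F.inj (sup_le hUV hWV)
      rw [F.map_comp, F.map_comp]
      exact ha.trans hb.symm
    have heq : pbool (∃ d : F.obj (U ⊓ U), F.map inf_le_right d = a)
        = pbool (∃ d : F.obj (U ⊓ W), F.map inf_le_right d = b) :=
      h1.trans ((congrArg ψ key).trans h2.symm)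
    have hleft : ∃ d : F.obj (U ⊓ U), F.map inf_le_right d = a :=
      ⟨F.map (le_inf le_rfl le_rfl) a, by rw [F.map_comp]; exact F.map_id U a⟩
    obtain ⟨d, hd⟩ := pbool_mp heq hleft
    refine ⟨d, ?_⟩
    show F.map (inf_le_right.trans hWV) d = x
    rw [← F.map_comp inf_le_right hWV, hd]
    exact hb
  · rintro 𝒲 h𝒲 ⟨hSV, y, hy⟩
    by_contra hcon
    push_neg at hcon
    obtain ⟨ψ, -, huniq⟩ := F.glue (sSup 𝒲) 𝒲 rfl Bool
      (fun W hW z => pbool (F.map (le_sSup hW) z = y))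
      (by
        intro T₁ h₁ T₂ h₂ c
        refine congrArg pbool ?_
        rw [F.map_comp, F.map_comp])
    have e1 : ψ = fun s => pbool (s = y) := (huniq _ (fun W hW z => rfl)).symm
    have e2 : ψ = fun _ => false := by
      refine (huniq _ (fun W hW z => ?_)).symm
      refine pbool_eq_false ?_
      intro hzy
      refine hcon W hW ⟨(le_sSup hW).trans hSV, z, ?_⟩
      show F.map ((le_sSup hW).trans hSV) z = x
      rw [← F.map_comp (le_sSup hW) hSV, hzy]; exact hy
    have hfin := congrFun (e1.symm.trans e2) y
    rw [pbool_eq_true rfl] at hfin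
    exact Bool.noConfusion hfin
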